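/- The α-half-sine pulse h_α(t) = cos(g_α(t)) for |t| < T and 0 otherwise (with g_α as defined and β = (π/2)(4/π)^{1/α}, α > 0) satisfies the constant-envelope condition h_α(t)² + h_α(t−T)² = 1 for all 0 < t < T. -/

import Mathlib

open Real Set

theorem alpha_half_sine_CE (α T β : ℝ) (hα : 0 < α) (hT : 0 < T)
    (hβ : β = (π / 2) * (4 / π) ^ (1 / α)) (g h : ℝ → ℝ)
    (hg1 : ∀ t : ℝ, |t| ≤ T / 2 → g t = (π * |t| / (β * T)) ^ α)
    (hg2 : ∀ t : ℝ, T / 2 < |t| → |t| < T → g t = π / 2 - (π * (T - |t|) / (β * T)) ^ α)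
    (hh : ∀ t : ℝ, h t = if |t| < T then Real.cos (g t) else 0) :
    ∀ t : ℝ, 0 < t → t < T → h t ^ 2 + h (t - T) ^ 2 = 1 := by
  intro t ht0 htT
  have hπ : (0:ℝ) < π := Real.pi_pos
  have hβpos : 0 < β := by rw [hβ]; positivity
  have habs1 : |t| = t := abs_of_pos ht0
  have habs2 : |t - T| = T - t := by rw [abs_of_neg (by linarith)]; ring
  have hht : h t = Real.cos (g t) := by
    rw [hh t, if_pos]; rw [habs1]; exact htT
  have hht2 : h (t - T) = Real.cos (g (t - T)) := by
    rw [hh, if_pos]; rw [habs2]; linarith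
  rw [hht, hht2]
  rcases lt_trichotomy t (T/2) with hc | hc | hc
  · have e1 : g t = (π * t / (β * T)) ^ α := by
      have := hg1 t (by rw [habs1]; linarith)
      rwa [habs1] at this
    have e2 : g (t - T) = π / 2 - (π * t / (β * T)) ^ α := by
      have := hg2 (t - T) (by rw [habs2]; linarith) (by rw [habs2]; linarith)
      rw [habs2] at this
      rw [this]; ring_nf
    rw [e1, e2, Real.cos_pi_div_two_sub]
    exact Real.cos_sq_add_sin_sq _
  · have h4π : (0:ℝ) < 4 / π := by positivity
    have hbinv : π / (2 * β) = ((π:ℝ) / 4) ^ (1 / α) := by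
      have hi : ((4:ℝ) / π)⁻¹ = π / 4 := inv_div 4 π
      rw [hβ, ← hi, Real.inv_rpow h4π.le]
      have hne : ((4:ℝ) / π) ^ (1 / α) ≠ 0 := by positivity
      field_simp
    have key : (π / (2 * β)) ^ α = π / 4 := by
      rw [hbinv, ← Real.rpow_mul (by positivity), one_div,
        inv_mul_cancel₀ hα.ne', Real.rpow_one]
    have e1 : g t = π / 4 := by
      have := hg1 t (by rw [habs1]; linarith)
      rw [habs1] at this
      rw [this, hc, show π * (T / 2) / (β * T) = π / (2 * β) by
        field_simp, key]
    have e2 : g (t - T) = π / 4 := by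
      have := hg1 (t - T) (by rw [habs2]; linarith)
      rw [habs2] at this
      rw [this, show T - t = T / 2 by linarith,
        show π * (T / 2) / (β * T) = π / (2 * β) by field_simp, key]
    rw [e1, e2, Real.cos_pi_div_four]
    rw [div_pow, Real.sq_sqrt (by norm_num : (0:ℝ) ≤ 2)]
    norm_num
  · have e1 : g t = π / 2 - (π * (T - t) / (β * T)) ^ α := by
      have := hg2 t (by rw [habs1]; linarith) (by rw [habs1]; exact htT)
      rwa [habs1] at this
    have e2 : g (t - T) = (π * (T - t) / (β * T)) ^ α := by
      have := hg1 (t - T) (by rw [habs2]; linarith)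
      rw [habs2] at this
      rw [this]
    rw [e1, e2, Real.cos_pi_div_two_sub, add_comm]
    exact Real.cos_sq_add_sin_sq _
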